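/- arXiv:1604.06612 — 2 statements merged into one kernel-verified Lean document; each statement's English description precedes it below -/
import Mathlib

section
/- Let (c_n) be positive reals and (d_n) positive integers, both tending to infinity. Then d_n < a_n(x) ≤ d_n(1 + 1/c_n) holds for infinitely many n with Lebesgue measure 0 or 1, according as the sum of 1/(c_n d_n) over those n with c_n ≤ d_n is finite or infinite. -/
open MeasureTheory Filter Set

/-- The Gauss map `τ(x) = 1/x - ⌊1/x⌋`, with `τ(0) = 0`. -/
noncomputable def gaussMap (x : ℝ) : ℝ := if x = 0 then 0 else 1 / x - ⌊1 / x⌋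

/-- The `n`-th continued fraction digit `a_n(x) = ⌊1/τ^{n-1}(x)⌋`. -/
noncomputable def cfDigit (n : ℕ) (x : ℝ) : ℕ := ⌊1 / (gaussMap^[n - 1] x)⌋₊

/-- The Gauss measure on `[0,1)` with density `1/((x+1) log 2)`. -/
noncomputable def gaussMeasure : Measure ℝ :=
  (volume.restrict (Set.Ico (0 : ℝ) 1)).withDensity
    (fun x => ENNReal.ofReal (1 / ((x + 1) * Real.log 2)))

namespace ZOL

/-- continuants (p, p', q, q') of a word, where the Möbius value is (p + p' t)/(q + q' t). -/
def conts : List ℕ → ℕ × ℕ × ℕ × ℕ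
  | [] => (0, 1, 1, 0)
  | a :: w =>
    let c := conts w
    (c.2.2.1, c.2.2.2, a * c.2.2.1 + c.1, a * c.2.2.2 + c.2.1)

def cp (w : List ℕ) : ℕ := (conts w).1
def cp' (w : List ℕ) : ℕ := (conts w).2.1
def cq (w : List ℕ) : ℕ := (conts w).2.2.1
def cq' (w : List ℕ) : ℕ := (conts w).2.2.2

@[simp] lemma cp_nil : cp [] = 0 := rfl
@[simp] lemma cp'_nil : cp' [] = 1 := rfl
@[simp] lemma cq_nil : cq [] = 1 := rfl
@[simp] lemma cq'_nil : cq' [] = 0 := rfl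
@[simp] lemma cp_cons (a : ℕ) (w : List ℕ) : cp (a :: w) = cq w := rfl
@[simp] lemma cp'_cons (a : ℕ) (w : List ℕ) : cp' (a :: w) = cq' w := rfl
@[simp] lemma cq_cons (a : ℕ) (w : List ℕ) : cq (a :: w) = a * cq w + cp w := rfl
@[simp] lemma cq'_cons (a : ℕ) (w : List ℕ) : cq' (a :: w) = a * cq' w + cp' w := rfl

/-- a word is valid if all entries are positive -/
def Valid (w : List ℕ) : Prop := ∀ a ∈ w, 1 ≤ a

lemma Valid.tail {a : ℕ} {w : List ℕ} (h : Valid (a :: w)) : Valid w :=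
  fun b hb => h b (List.mem_cons_of_mem a hb)

lemma Valid.head {a : ℕ} {w : List ℕ} (h : Valid (a :: w)) : 1 ≤ a :=
  h a (by simp)

lemma aux_ineq {w : List ℕ} (h : Valid w) :
    cq' w ≤ cq w ∧ cp' w + cq' w ≤ cp w + cq w := by
  induction w with
  | nil => simp
  | cons a w ih =>
    obtain ⟨h1, h2⟩ := ih h.tail
    obtain ⟨b, rfl⟩ : ∃ b, a = b + 1 := ⟨a - 1, by have := h.head; omega⟩
    have hb : b * cq' w ≤ b * cq w := Nat.mul_le_mul_left b h1
    simp only [cq'_cons, cq_cons, cp_cons, cp'_cons, Nat.add_mul, Nat.one_mul]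
    omega

lemma cq'_le_cq {w : List ℕ} (h : Valid w) : cq' w ≤ cq w := (aux_ineq h).1

lemma cq_pos {w : List ℕ} (h : Valid w) : 1 ≤ cq w := by
  induction w with
  | nil => simp
  | cons a w ih =>
    have h1 := ih h.tail
    have h2 := h.head
    simp only [cq_cons]
    nlinarith

lemma aux_ineq2 {w : List ℕ} (h : Valid w) :
    cp w ≤ cq w ∧ cp w + cp' w ≤ cq w + cq' w := by
  induction w with
  | nil => simp
  | cons a w ih =>
    obtain ⟨h1, h2⟩ := ih h.tail
    have hq := cq_pos h.tail
    obtain ⟨b, rfl⟩ : ∃ b, a = b + 1 := ⟨a - 1, by have := h.head; omega⟩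
    simp only [cq'_cons, cq_cons, cp_cons, cp'_cons, Nat.add_mul, Nat.one_mul]
    omega

lemma cp_le_cq {w : List ℕ} (h : Valid w) : cp w ≤ cq w := (aux_ineq2 h).1

lemma det_eq {w : List ℕ} : (cp' w : ℤ) * cq w - cp w * cq' w = (-1) ^ w.length := by
  induction w with
  | nil => simp
  | cons a w ih =>
    simp only [cp'_cons, cq_cons, cp_cons, cq'_cons, List.length_cons]
    push_cast
    rw [pow_succ]
    linear_combination -ih

noncomputable def fval (w : List ℕ) (t : ℝ) : ℝ :=
  (cp w + cp' w * t) / (cq w + cq' w * t)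

noncomputable def den (w : List ℕ) (t : ℝ) : ℝ := cq w + cq' w * t

lemma den_pos {w : List ℕ} (h : Valid w) {t : ℝ} (ht : 0 ≤ t) : 0 < den w t := by
  have h1 := cq_pos h
  have h2 : (1 : ℝ) ≤ (cq w : ℝ) := by exact_mod_cast h1
  have h3 : (0:ℝ) ≤ (cq' w : ℝ) * t := mul_nonneg (by positivity) ht
  unfold den; linarith

@[simp] lemma fval_nil (t : ℝ) : fval [] t = t := by simp [fval]

lemma fval_cons {a : ℕ} {w : List ℕ} (h : Valid (a :: w)) {t : ℝ} (ht : 0 ≤ t) :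
    fval (a :: w) t = 1 / (a + fval w t) := by
  have hdw := den_pos h.tail ht
  have hdaw := den_pos h ht
  have ha : 1 ≤ a := h.head
  have ha' : (1:ℝ) ≤ (a:ℝ) := by exact_mod_cast ha
  unfold fval den at *
  have hnum : (0:ℝ) ≤ (cp w + cp' w * t) := by positivity
  have hfr : (0:ℝ) ≤ (cp w + cp' w * t) / (cq w + cq' w * t) := div_nonneg hnum hdw.le
  have hden2 : (a:ℝ) + (cp w + cp' w * t) / (cq w + cq' w * t) ≠ 0 := by positivity
  simp only [cp_cons, cp'_cons, cq_cons, cq'_cons] at *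
  push_cast at *
  field_simp
  ring_nf
  rw [← add_mul, ← add_mul, ← add_mul]
  exact mul_inv_cancel₀ (ne_of_gt (by linarith))

lemma detR {w : List ℕ} : (cp' w : ℝ) * cq w - cp w * cq' w = (-1) ^ w.length := by
  have := det_eq (w := w)
  exact_mod_cast this

lemma fval_sub {w : List ℕ} {α β : ℝ} (hα : den w α ≠ 0) (hβ : den w β ≠ 0) :
    fval w β - fval w α = (-1) ^ w.length * (β - α) / (den w α * den w β) := by
  have hdet := detR (w := w)
  unfold fval den at *
  have key : ((cp w : ℝ) + cp' w * β) * ((cq w : ℝ) + cq' w * α)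
      - ((cq w : ℝ) + cq' w * β) * ((cp w : ℝ) + cp' w * α)
      = (-1) ^ w.length * (β - α) := by linear_combination (β - α) * hdet
  rw [div_sub_div _ _ hβ hα, key, mul_comm ((cq w : ℝ) + cq' w * β)]

/-! ### ordering -/

lemma max_min_sub {w : List ℕ} (h : Valid w) {α β : ℝ} (h0 : 0 ≤ α) (hle : α ≤ β) :
    max (fval w α) (fval w β) - min (fval w α) (fval w β)
      = (β - α) / (den w α * den w β) := by
  have hdα := den_pos h h0
  have hdβ := den_pos h (le_trans h0 hle)
  rw [max_sub_min_eq_abs, fval_sub hdα.ne' hdβ.ne']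
  rw [abs_div, abs_mul, abs_pow, abs_neg, abs_one, one_pow, one_mul,
    abs_of_nonneg (by linarith : (0:ℝ) ≤ β - α), abs_of_pos (by positivity)]

lemma fval_mem_Ioo {w : List ℕ} (h : Valid w) {α β t : ℝ} (h0 : 0 ≤ α)
    (ht : t ∈ Set.Ioo α β) :
    fval w t ∈ Set.Ioo (min (fval w α) (fval w β)) (max (fval w α) (fval w β)) := by
  obtain ⟨h1, h2⟩ := ht
  have h0t : 0 ≤ t := le_trans h0 h1.le
  have hdα := den_pos h h0
  have hdβ := den_pos h (by linarith : (0:ℝ) ≤ β)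
  have hdt := den_pos h h0t
  have s1 := fval_sub (w := w) hdα.ne' hdt.ne'
  have s2 := fval_sub (w := w) hdt.ne' hdβ.ne'
  have p1 : (0:ℝ) < (t - α) / (den w α * den w t) :=
    div_pos (by linarith) (by positivity)
  have p2 : (0:ℝ) < (β - t) / (den w t * den w β) :=
    div_pos (by linarith) (by positivity)
  rcases Nat.even_or_odd w.length with he | ho
  · rw [he.neg_one_pow] at s1 s2
    have s1' : fval w t - fval w α = (t - α) / (den w α * den w t) := by
      rw [s1]; ring
    have s2' : fval w β - fval w t = (β - t) / (den w t * den w β) := by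
      rw [s2]; ring
    exact ⟨lt_of_le_of_lt (min_le_left _ _) (by linarith),
      lt_of_lt_of_le (by linarith) (le_max_right _ _)⟩
  · rw [ho.neg_one_pow] at s1 s2
    have s1' : fval w t - fval w α = -((t - α) / (den w α * den w t)) := by
      rw [s1]; ring
    have s2' : fval w β - fval w t = -((β - t) / (den w t * den w β)) := by
      rw [s2]; ring
    exact ⟨lt_of_le_of_lt (min_le_right _ _) (by linarith),
      lt_of_lt_of_le (by linarith) (le_max_left _ _)⟩

lemma fval_append {w : List ℕ} {a : ℕ} (h : Valid (w ++ [a])) {t : ℝ} (ht : 0 ≤ t) :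
    fval (w ++ [a]) t = fval w (1 / ((a:ℝ) + t)) := by
  induction w with
  | nil =>
    have hva : Valid [a] := by simpa using h
    rw [List.nil_append, fval_cons hva ht]
    simp
  | cons b w ih =>
    have hv : Valid (b :: (w ++ [a])) := by simpa using h
    have hv2 : Valid (w ++ [a]) := hv.tail
    have ha : 1 ≤ a := by
      have := h a (by simp)
      omega
    have hinv : (0:ℝ) ≤ 1 / ((a:ℝ) + t) := by positivity
    have hvbw : Valid (b :: w) := by
      intro x hx
      rcases List.mem_cons.1 hx with rfl | hx
      · exact hv.head
      · exact hv2 x (by simp [hx])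
    rw [List.cons_append, fval_cons hv ht, ih hv2, fval_cons hvbw hinv]

/-! ### dynamics of the Gauss map -/

lemma gauss_step {x : ℝ} (hx : Irrational x) (h : x ∈ Set.Ioo (0:ℝ) 1) :
    Irrational (gaussMap x) ∧ gaussMap x ∈ Set.Ioo (0:ℝ) 1 := by
  obtain ⟨h0, h1⟩ := h
  have hne : x ≠ 0 := ne_of_gt h0
  have hg : gaussMap x = Int.fract (1/x) := by
    rw [gaussMap, if_neg hne, Int.fract]
  have hinv : Irrational (1/x) := by
    rw [one_div]; exact hx.inv
  have hirr : Irrational (gaussMap x) := by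
    rw [hg, Int.fract]
    exact hinv.sub_intCast _
  have hnn : (0:ℝ) ≤ gaussMap x := by rw [hg]; exact Int.fract_nonneg _
  refine ⟨hirr, lt_of_le_of_ne hnn ?_, by rw [hg]; exact Int.fract_lt_one _⟩
  intro h'
  exact hirr ⟨0, by exact_mod_cast h'⟩

lemma gauss_iter {x : ℝ} (hx : Irrational x) (h : x ∈ Set.Ioo (0:ℝ) 1) (n : ℕ) :
    Irrational (gaussMap^[n] x) ∧ gaussMap^[n] x ∈ Set.Ioo (0:ℝ) 1 := by
  induction n with
  | zero => exact ⟨hx, h⟩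
  | succ n ih =>
    rw [Function.iterate_succ_apply']
    exact gauss_step ih.1 ih.2

lemma digit_pos {t : ℝ} (h : t ∈ Set.Ioo (0:ℝ) 1) : 1 ≤ ⌊1/t⌋₊ := by
  have h2 : (1:ℝ) ≤ 1 / t := by
    rw [le_div_iff₀ h.1]; linarith [h.2]
  exact Nat.le_floor (by exact_mod_cast h2)

/-- the word of the first `n` digits -/
noncomputable def wordOf (n : ℕ) (x : ℝ) : List ℕ :=
  (List.range n).map (fun k => ⌊1/(gaussMap^[k] x)⌋₊)

@[simp] lemma wordOf_zero (x : ℝ) : wordOf 0 x = [] := rfl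

@[simp] lemma wordOf_length (n : ℕ) (x : ℝ) : (wordOf n x).length = n := by
  simp [wordOf]

lemma wordOf_succ (n : ℕ) (x : ℝ) :
    wordOf (n+1) x = wordOf n x ++ [⌊1/(gaussMap^[n] x)⌋₊] := by
  simp [wordOf, List.range_succ]

lemma wordOf_succ_head (n : ℕ) (x : ℝ) :
    wordOf (n+1) x = ⌊1/x⌋₊ :: wordOf n (gaussMap x) := by
  simp only [wordOf, List.range_succ_eq_map, List.map_cons,
    Function.iterate_zero_apply, List.map_map]
  congr 1

lemma wordOf_valid {x : ℝ} (hx : Irrational x) (h : x ∈ Set.Ioo (0:ℝ) 1) (n : ℕ) :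
    Valid (wordOf n x) := by
  intro a ha
  rw [wordOf, List.mem_map] at ha
  obtain ⟨k, _, rfl⟩ := ha
  exact digit_pos (gauss_iter hx h k).2

lemma floor_inv_iter {x : ℝ} (hx : Irrational x) (h : x ∈ Set.Ioo (0:ℝ) 1) (n : ℕ) :
    gaussMap^[n] x = 1 / ((⌊1/(gaussMap^[n] x)⌋₊ : ℝ) + gaussMap^[n+1] x) := by
  obtain ⟨hyirr, hy⟩ := gauss_iter hx h n
  set y := gaussMap^[n] x with hy_def
  have hyne : y ≠ 0 := ne_of_gt hy.1
  have h1y : (0:ℝ) < 1 / y := div_pos one_pos hy.1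
  have hfl : ((⌊1/y⌋₊ : ℝ)) = ((⌊1/y⌋ : ℤ) : ℝ) := by
    exact_mod_cast Int.natCast_floor_eq_floor h1y.le
  have hgy : gaussMap^[n+1] x = 1/y - (⌊1/y⌋₊ : ℝ) := by
    rw [Function.iterate_succ_apply', ← hy_def, gaussMap, if_neg hyne, hfl]
  rw [hgy]
  have h2 : (⌊1/y⌋₊ : ℝ) + (1/y - (⌊1/y⌋₊ : ℝ)) = 1/y := by ring
  rw [h2, one_div_one_div]

/-- forward: every irrational is the Möbius value of its digit word. -/
lemma eq_fval {x : ℝ} (hx : Irrational x) (h : x ∈ Set.Ioo (0:ℝ) 1) (n : ℕ) :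
    x = fval (wordOf n x) (gaussMap^[n] x) := by
  induction n with
  | zero => simp
  | succ n ih =>
    rw [wordOf_succ]
    have hval : Valid (wordOf (n+1) x) := wordOf_valid hx h (n+1)
    rw [wordOf_succ] at hval
    have hnext := (gauss_iter hx h (n+1)).2
    rw [fval_append hval hnext.1.le, ← floor_inv_iter hx h n]
    exact ih

/-- backward: the Möbius value of a valid word at an irrational has that digit word. -/
lemma fval_digits {w : List ℕ} (hw : Valid w) {t : ℝ} (ht : Irrational t)
    (htI : t ∈ Set.Ioo (0:ℝ) 1) :
    Irrational (fval w t) ∧ fval w t ∈ Set.Ioo (0:ℝ) 1 ∧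
      gaussMap^[w.length] (fval w t) = t ∧ wordOf w.length (fval w t) = w := by
  induction w with
  | nil => simpa using ⟨ht, htI⟩
  | cons a w ih =>
    obtain ⟨hyirr, hyI, hyg, hyw⟩ := ih hw.tail
    set y := fval w t with hy_def
    have ha : 1 ≤ a := hw.head
    have haR : (1:ℝ) ≤ (a:ℝ) := by exact_mod_cast ha
    have hx_eq : fval (a :: w) t = 1 / ((a:ℝ) + y) := fval_cons hw htI.1.le
    set x := fval (a :: w) t with hx_def
    have hay1 : (1:ℝ) < (a:ℝ) + y := by linarith [hyI.1]
    have hay_pos : (0:ℝ) < (a:ℝ) + y := by linarith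
    have hxirr : Irrational x := by
      rw [hx_eq, one_div]
      exact (hyirr.natCast_add a).inv
    have hx_pos : 0 < x := by rw [hx_eq]; positivity
    have hx_lt : x < 1 := by
      rw [hx_eq, div_lt_one hay_pos]; linarith
    have hinvx : 1 / x = (a:ℝ) + y := by rw [hx_eq, one_div_one_div]
    have hfloorN : ⌊1/x⌋₊ = a := by
      rw [hinvx]
      rw [Nat.floor_eq_iff' (by omega)]
      constructor
      · linarith [hyI.1]
      · push_cast; linarith [hyI.2]
    have hfloorZ : ⌊1/x⌋ = (a:ℤ) := by
      rw [hinvx]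
      rw [Int.floor_eq_iff]
      constructor
      · push_cast; linarith [hyI.1]
      · push_cast; linarith [hyI.2]
    have hgx : gaussMap x = y := by
      rw [gaussMap, if_neg (ne_of_gt hx_pos), hfloorZ, hinvx]
      push_cast; ring
    refine ⟨hxirr, ⟨hx_pos, hx_lt⟩, ?_, ?_⟩
    · rw [List.length_cons, Function.iterate_succ_apply, hgx, hyg]
    · rw [List.length_cons, wordOf_succ_head, hgx, hfloorN, hyw]

/-- a cylinder-with-window event. -/
def cylE (w : List ℕ) (α β : ℝ) : Set ℝ :=
  {x | Irrational x ∧ x ∈ Set.Ioo (0:ℝ) 1 ∧ wordOf w.length x = w ∧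
    gaussMap^[w.length] x ∈ Set.Ioo α β}

lemma ratSet_countable : ({t : ℝ | ¬ Irrational t}).Countable := by
  have : {t : ℝ | ¬ Irrational t} = Set.range ((↑) : ℚ → ℝ) := by
    ext t; simp [Irrational]
  rw [this]
  exact Set.countable_range _

lemma fval_continuousOn {w : List ℕ} (hw : Valid w) {α β : ℝ} (h0 : 0 ≤ α) :
    ContinuousOn (fval w) (Set.Icc α β) := by
  apply ContinuousOn.div
  · fun_prop
  · fun_prop
  · intro t ht
    exact ne_of_gt (den_pos hw (le_trans h0 ht.1))

lemma cylE_spec {w : List ℕ} (hw : Valid w) {α β : ℝ} (h0 : 0 ≤ α) (hαβ : α < β)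
    (hβ1 : β ≤ 1) :
    MeasurableSet (cylE w α β) ∧
      volume (cylE w α β) = ENNReal.ofReal ((β - α) / (den w α * den w β)) := by
  set l := min (fval w α) (fval w β) with hl
  set r := max (fval w α) (fval w β) with hr
  set Q : Set ℝ := fval w '' {t | ¬ Irrational t} with hQ
  have hQc : Q.Countable := ratSet_countable.image _
  -- upper inclusion
  have hsub : cylE w α β ⊆ Set.Ioo l r := by
    rintro x ⟨hxirr, hxI, hxw, hxg⟩
    have := eq_fval hxirr hxI w.length
    rw [hxw] at this
    rw [this]
    exact fval_mem_Ioo hw h0 hxg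
  -- lower inclusion
  have hsub2 : Set.Ioo l r \ Q ⊆ cylE w α β := by
    rintro x ⟨hxI, hxQ⟩
    have himg : Set.Ioo l r ⊆ fval w '' Set.Ioo α β := by
      rcases le_total (fval w α) (fval w β) with hc | hc
      · rw [hl, hr, min_eq_left hc, max_eq_right hc]
        exact intermediate_value_Ioo hαβ.le (fval_continuousOn hw h0)
      · rw [hl, hr, min_eq_right hc, max_eq_left hc]
        exact intermediate_value_Ioo' hαβ.le (fval_continuousOn hw h0)
    obtain ⟨t, htI, rfl⟩ := himg hxI
    have htirr : Irrational t := by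
      by_contra hcon
      exact hxQ ⟨t, hcon, rfl⟩
    have ht01 : t ∈ Set.Ioo (0:ℝ) 1 :=
      ⟨lt_of_le_of_lt h0 htI.1, lt_of_lt_of_le htI.2 hβ1⟩
    obtain ⟨h1, h2, h3, h4⟩ := fval_digits hw htirr ht01
    exact ⟨h1, h2, h4, by rw [h3]; exact htI⟩
  have hdecomp : cylE w α β = (Set.Ioo l r \ Q) ∪ (cylE w α β ∩ Q) := by
    apply Set.Subset.antisymm
    · intro x hx
      by_cases hxQ : x ∈ Q
      · exact Or.inr ⟨hx, hxQ⟩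
      · exact Or.inl ⟨hsub hx, hxQ⟩
    · rintro x (hx | hx)
      · exact hsub2 hx
      · exact hx.1
  have hmeas : MeasurableSet (cylE w α β) := by
    rw [hdecomp]
    exact (measurableSet_Ioo.diff hQc.measurableSet).union
      ((hQc.mono Set.inter_subset_right).measurableSet)
  refine ⟨hmeas, ?_⟩
  have hle : volume (cylE w α β) ≤ ENNReal.ofReal (r - l) := by
    calc volume (cylE w α β) ≤ volume (Set.Ioo l r) := measure_mono hsub
      _ = ENNReal.ofReal (r - l) := Real.volume_Ioo
  have hge : ENNReal.ofReal (r - l) ≤ volume (cylE w α β) := by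
    calc ENNReal.ofReal (r - l) = volume (Set.Ioo l r) := Real.volume_Ioo.symm
      _ = volume (Set.Ioo l r \ Q) := (measure_diff_null (hQc.measure_zero _)).symm
      _ ≤ volume (cylE w α β) := measure_mono hsub2
  have : volume (cylE w α β) = ENNReal.ofReal (r - l) := le_antisymm hle hge
  rw [this, hr, hl, max_min_sub hw h0 hαβ.le]

/-! ### digit events -/

lemma digit_eq_iff_mem {t : ℝ} (htirr : Irrational t) (ht : t ∈ Set.Ioo (0:ℝ) 1)
    {k : ℕ} (hk : 1 ≤ k) :
    ⌊1/t⌋₊ = k ↔ t ∈ Set.Ioo (1/((k:ℝ)+1)) (1/(k:ℝ)) := by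
  have ht0 : (0:ℝ) < t := ht.1
  have hkR : (0:ℝ) < (k:ℝ) := by exact_mod_cast hk
  have hk1R : (0:ℝ) < (k:ℝ) + 1 := by positivity
  rw [Nat.floor_eq_iff' (by omega)]
  constructor
  · rintro ⟨h1, h2⟩
    rw [le_div_iff₀ ht0] at h1
    rw [div_lt_iff₀ ht0] at h2
    push_cast at h1 h2
    constructor
    · rw [div_lt_iff₀ hk1R]; linarith
    · have hne : t ≠ 1/(k:ℝ) := by
        intro hcon
        exact htirr ⟨1/(k:ℚ), by push_cast [hcon]; ring⟩
      have hle : t ≤ 1/(k:ℝ) := by rw [le_div_iff₀ hkR]; linarith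
      exact lt_of_le_of_ne hle hne
  · rintro ⟨h1, h2⟩
    rw [div_lt_iff₀ hk1R] at h1
    rw [lt_div_iff₀ hkR] at h2
    push_cast at h1 h2 ⊢
    constructor
    · rw [le_div_iff₀ ht0]; linarith
    · rw [div_lt_iff₀ ht0]; push_cast; linarith

/-- the event that the word is `w` and the next digit lies in `S`. -/
def digitEv (w : List ℕ) (S : Finset ℕ) : Set ℝ :=
  ⋃ k ∈ S, cylE w (1/((k:ℝ)+1)) (1/(k:ℝ))

lemma digitEv_mem {w : List ℕ} {S : Finset ℕ} (hS : ∀ k ∈ S, 1 ≤ k) {x : ℝ} :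
    x ∈ digitEv w S ↔ Irrational x ∧ x ∈ Set.Ioo (0:ℝ) 1 ∧ wordOf w.length x = w ∧
      ⌊1/(gaussMap^[w.length] x)⌋₊ ∈ S := by
  constructor
  · intro hx
    rw [digitEv, Set.mem_iUnion₂] at hx
    obtain ⟨k, hkS, hxirr, hxI, hxw, hxg⟩ := hx
    refine ⟨hxirr, hxI, hxw, ?_⟩
    have hit := gauss_iter hxirr hxI w.length
    rw [(digit_eq_iff_mem hit.1 hit.2 (hS k hkS)).2 hxg]
    exact hkS
  · rintro ⟨hxirr, hxI, hxw, hxg⟩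
    rw [digitEv, Set.mem_iUnion₂]
    refine ⟨⌊1/(gaussMap^[w.length] x)⌋₊, hxg, hxirr, hxI, hxw, ?_⟩
    have hit := gauss_iter hxirr hxI w.length
    exact (digit_eq_iff_mem hit.1 hit.2 (hS _ hxg)).1 rfl

/-- length of the full cylinder of `w`. -/
noncomputable def cylLen (w : List ℕ) : ℝ := 1 / ((cq w : ℝ) * ((cq w : ℝ) + (cq' w : ℝ)))

lemma cylLen_pos {w : List ℕ} (hw : Valid w) : 0 < cylLen w := by
  have h1 : (1:ℝ) ≤ (cq w : ℝ) := by exact_mod_cast cq_pos hw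
  have h2 : (0:ℝ) ≤ (cq' w : ℝ) := by positivity
  rw [cylLen]; positivity

lemma vol_cyl {w : List ℕ} (hw : Valid w) :
    MeasurableSet (cylE w 0 1) ∧ volume (cylE w 0 1) = ENNReal.ofReal (cylLen w) := by
  have h := cylE_spec hw (le_refl (0:ℝ)) one_pos (le_refl (1:ℝ))
  refine ⟨h.1, ?_⟩
  rw [h.2]
  congr 1
  unfold den cylLen
  rw [mul_zero, add_zero, mul_one, sub_zero]

/-- the key distortion bound for a window inside a cylinder. -/
lemma window_len_bounds {w : List ℕ} (hw : Valid w) {α β : ℝ} (h0 : 0 ≤ α) (hαβ : α ≤ β)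
    (hβ1 : β ≤ 1) :
    (β - α) / 2 * cylLen w ≤ (β - α) / (den w α * den w β) ∧
      (β - α) / (den w α * den w β) ≤ 2 * (β - α) * cylLen w := by
  have hQ1 : (1:ℝ) ≤ (cq w : ℝ) := by exact_mod_cast cq_pos hw
  have hQ'0 : (0:ℝ) ≤ (cq' w : ℝ) := by positivity
  have hQ'Q : (cq' w : ℝ) ≤ (cq w : ℝ) := by exact_mod_cast cq'_le_cq hw
  set Q := (cq w : ℝ); set Q' := (cq' w : ℝ)
  have hdenα : Q ≤ den w α ∧ den w α ≤ Q + Q' := by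
    constructor
    · unfold den; nlinarith
    · unfold den; nlinarith
  have hdenβ : Q ≤ den w β ∧ den w β ≤ Q + Q' := by
    constructor
    · unfold den; nlinarith
    · unfold den; nlinarith
  have hd1 := den_pos hw h0
  have hd2 := den_pos hw (le_trans h0 hαβ)
  have hba : 0 ≤ β - α := by linarith
  have hQQ' : (0:ℝ) < Q * (Q + Q') := by nlinarith
  have hL : cylLen w = 1 / (Q * (Q + Q')) := rfl
  constructor
  · rw [hL]
    have hub : den w α * den w β ≤ 2 * (Q * (Q + Q')) := by nlinarith
    calc (β - α) / 2 * (1 / (Q * (Q + Q'))) = (β - α) / (2 * (Q * (Q + Q'))) := by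
          rw [div_mul_div_comm, mul_one]
      _ ≤ (β - α) / (den w α * den w β) := by
          apply div_le_div_of_nonneg_left hba (by positivity) hub
  · rw [hL]
    have hlb : Q * (Q + Q') ≤ 2 * (den w α * den w β) := by nlinarith
    calc (β - α) / (den w α * den w β) = 2 * (β - α) / (2 * (den w α * den w β)) := by
          rw [mul_div_mul_left _ _ (two_ne_zero)]
      _ ≤ 2 * (β - α) / (Q * (Q + Q')) := by
          apply div_le_div_of_nonneg_left (by linarith) hQQ' hlb
      _ = 2 * (β - α) * (1 / (Q * (Q + Q'))) := by
          rw [mul_one_div]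

/-- the total gap length of a digit set. -/
noncomputable def gapSum (S : Finset ℕ) : ℝ := ∑ k ∈ S, (1/(k:ℝ) - 1/((k:ℝ)+1))

lemma gapSum_nonneg {S : Finset ℕ} (hS : ∀ k ∈ S, 1 ≤ k) : 0 ≤ gapSum S := by
  apply Finset.sum_nonneg
  intro k hk
  have hk1 : (1:ℝ) ≤ (k:ℝ) := by exact_mod_cast hS k hk
  have : 1/((k:ℝ)+1) ≤ 1/(k:ℝ) := by
    apply div_le_div_of_nonneg_left one_pos.le (by linarith) (by linarith)
  linarith

lemma digitEv_spec {w : List ℕ} (hw : Valid w) {S : Finset ℕ} (hS : ∀ k ∈ S, 1 ≤ k) :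
    MeasurableSet (digitEv w S) ∧
      volume (digitEv w S) ≤ ENNReal.ofReal (2 * gapSum S * cylLen w) ∧
      ENNReal.ofReal (gapSum S / 2 * cylLen w) ≤ volume (digitEv w S) := by
  have hspec : ∀ k ∈ S, MeasurableSet (cylE w (1/((k:ℝ)+1)) (1/(k:ℝ))) ∧
      volume (cylE w (1/((k:ℝ)+1)) (1/(k:ℝ)))
        = ENNReal.ofReal ((1/(k:ℝ) - 1/((k:ℝ)+1)) / (den w (1/((k:ℝ)+1)) * den w (1/(k:ℝ)))) := by
    intro k hk
    have hk1 : (1:ℝ) ≤ (k:ℝ) := by exact_mod_cast hS k hk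
    have h1 : (0:ℝ) ≤ 1/((k:ℝ)+1) := by positivity
    have h2 : 1/((k:ℝ)+1) < 1/(k:ℝ) := by
      apply div_lt_div_of_pos_left one_pos (by linarith) (by linarith)
    have h3 : 1/(k:ℝ) ≤ 1 := by
      rw [div_le_one (by linarith)]; exact hk1
    exact cylE_spec hw h1 h2 h3
  have hmeas : MeasurableSet (digitEv w S) := by
    apply Finset.measurableSet_biUnion
    intro k hk
    exact (hspec k hk).1
  have hdisj : (S : Set ℕ).PairwiseDisjoint
      (fun k => cylE w (1/((k:ℝ)+1)) (1/(k:ℝ))) := by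
    intro k hk k' hk' hkk'
    simp only [Function.onFun, Set.disjoint_left]
    rintro x ⟨hxirr, hxI, hxw, hxg⟩ ⟨hxirr', hxI', hxw', hxg'⟩
    have hit := gauss_iter hxirr hxI w.length
    have e1 := (digit_eq_iff_mem hit.1 hit.2 (hS k hk)).2 hxg
    have e2 := (digit_eq_iff_mem hit.1 hit.2 (hS k' hk')).2 hxg'
    exact hkk' (e1 ▸ e2 ▸ rfl)
  have hvol : volume (digitEv w S)
      = ∑ k ∈ S, volume (cylE w (1/((k:ℝ)+1)) (1/(k:ℝ))) := by
    rw [digitEv]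
    exact measure_biUnion_finset hdisj (fun k hk => (hspec k hk).1)
  have hLpos := cylLen_pos hw
  refine ⟨hmeas, ?_, ?_⟩
  · rw [hvol]
    calc ∑ k ∈ S, volume (cylE w (1/((k:ℝ)+1)) (1/(k:ℝ)))
        ≤ ∑ k ∈ S, ENNReal.ofReal (2 * (1/(k:ℝ) - 1/((k:ℝ)+1)) * cylLen w) := by
          apply Finset.sum_le_sum
          intro k hk
          rw [(hspec k hk).2]
          apply ENNReal.ofReal_le_ofReal
          have hk1 : (1:ℝ) ≤ (k:ℝ) := by exact_mod_cast hS k hk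
          have h1 : (0:ℝ) ≤ 1/((k:ℝ)+1) := by positivity
          have h2 : 1/((k:ℝ)+1) ≤ 1/(k:ℝ) := by
            apply div_le_div_of_nonneg_left one_pos.le (by linarith) (by linarith)
          have h3 : 1/(k:ℝ) ≤ 1 := by
            rw [div_le_one (by linarith)]; exact hk1
          exact (window_len_bounds hw h1 h2 h3).2
      _ = ENNReal.ofReal (2 * gapSum S * cylLen w) := by
          rw [← ENNReal.ofReal_sum_of_nonneg]
          · congr 1
            rw [gapSum, Finset.mul_sum, Finset.sum_mul]
          · intro k hk
            have hk1 : (1:ℝ) ≤ (k:ℝ) := by exact_mod_cast hS k hk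
            have h2 : 1/((k:ℝ)+1) ≤ 1/(k:ℝ) := by
              apply div_le_div_of_nonneg_left one_pos.le (by linarith) (by linarith)
            nlinarith
  · rw [hvol]
    calc ENNReal.ofReal (gapSum S / 2 * cylLen w)
        = ∑ k ∈ S, ENNReal.ofReal ((1/(k:ℝ) - 1/((k:ℝ)+1)) / 2 * cylLen w) := by
          rw [← ENNReal.ofReal_sum_of_nonneg]
          · congr 1
            rw [gapSum, Finset.sum_div, Finset.sum_mul]
          · intro k hk
            have hk1 : (1:ℝ) ≤ (k:ℝ) := by exact_mod_cast hS k hk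
            have h2 : 1/((k:ℝ)+1) ≤ 1/(k:ℝ) := by
              apply div_le_div_of_nonneg_left one_pos.le (by linarith) (by linarith)
            nlinarith
      _ ≤ ∑ k ∈ S, volume (cylE w (1/((k:ℝ)+1)) (1/(k:ℝ))) := by
          apply Finset.sum_le_sum
          intro k hk
          rw [(hspec k hk).2]
          apply ENNReal.ofReal_le_ofReal
          have hk1 : (1:ℝ) ≤ (k:ℝ) := by exact_mod_cast hS k hk
          have h1 : (0:ℝ) ≤ 1/((k:ℝ)+1) := by positivity
          have h2 : 1/((k:ℝ)+1) ≤ 1/(k:ℝ) := by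
            apply div_le_div_of_nonneg_left one_pos.le (by linarith) (by linarith)
          have h3 : 1/(k:ℝ) ≤ 1 := by
            rw [div_le_one (by linarith)]; exact hk1
          exact (window_len_bounds hw h1 h2 h3).1

/-! ### global events -/

/-- valid words of length `j` -/
def V (j : ℕ) : Set (List ℕ) := {w | w.length = j ∧ Valid w}

lemma wordOf_getD {x : ℝ} {i N : ℕ} (h : i < N) :
    (wordOf N x).getD i 0 = ⌊1/(gaussMap^[i] x)⌋₊ := by
  have hlen : i < (wordOf N x).length := by simp [h]
  rw [List.getD_eq_getElem _ _ hlen]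
  simp [wordOf]

lemma digitEv_subset_cyl {w : List ℕ} {S : Finset ℕ} :
    digitEv w S ⊆ cylE w 0 1 := by
  rintro x hx
  rw [digitEv, Set.mem_iUnion₂] at hx
  obtain ⟨k, hkS, hxirr, hxI, hxw, _⟩ := hx
  exact ⟨hxirr, hxI, hxw, (gauss_iter hxirr hxI w.length).2⟩

lemma mem_cyl_iff {w : List ℕ} {x : ℝ} :
    x ∈ cylE w 0 1 ↔ Irrational x ∧ x ∈ Set.Ioo (0:ℝ) 1 ∧ wordOf w.length x = w := by
  constructor
  · rintro ⟨h1, h2, h3, _⟩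
    exact ⟨h1, h2, h3⟩
  · rintro ⟨h1, h2, h3⟩
    exact ⟨h1, h2, h3, (gauss_iter h1 h2 w.length).2⟩

lemma cyl_disjoint {j : ℕ} : (V j).PairwiseDisjoint (fun w => cylE w 0 1) := by
  intro w hw w' hw' hne
  simp only [Function.onFun, Set.disjoint_left]
  intro x hx hx'
  rw [mem_cyl_iff] at hx hx'
  apply hne
  rw [← hx.2.2, ← hx'.2.2, hw.1, hw'.1]

lemma cyl_sub_disjoint {j : ℕ} (f : List ℕ → Set ℝ) (hf : ∀ w, f w ⊆ cylE w 0 1) :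
    (V j).PairwiseDisjoint f := by
  intro w hw w' hw' hne
  exact Set.disjoint_of_subset (hf w) (hf w') (cyl_disjoint hw hw' hne)

lemma biUnion_cyl_subset (W : Set (List ℕ)) :
    (⋃ w ∈ W, cylE w 0 1) ⊆ Set.Ioo (0:ℝ) 1 := by
  intro x hx
  rw [Set.mem_iUnion₂] at hx
  obtain ⟨w, _, hx⟩ := hx
  exact hx.2.1

/-- total measure of a disjoint union of cylinders is at most one,
and sums of cylinder contributions. -/
lemma sum_vol_cyl_le {j : ℕ} {W : Set (List ℕ)} (hW : W ⊆ V j) :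
    ∑' w : W, volume (cylE (w : List ℕ) 0 1) ≤ 1 := by
  have hcnt : W.Countable := Set.to_countable W
  rw [← measure_biUnion hcnt (Set.PairwiseDisjoint.subset cyl_disjoint hW)
    (fun w hw => (vol_cyl (hW hw).2).1)]
  calc volume (⋃ w ∈ W, cylE w 0 1) ≤ volume (Set.Ioo (0:ℝ) 1) :=
        measure_mono (biUnion_cyl_subset W)
    _ = 1 := by rw [Real.volume_Ioo]; norm_num

/-- the global event: digit `j+1` lies in `S`. -/
def Aev (j : ℕ) (S : Finset ℕ) : Set ℝ :=
  ⋃ w ∈ V j, digitEv w S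

lemma Aev_mem {j : ℕ} {S : Finset ℕ} (hS : ∀ k ∈ S, 1 ≤ k) {x : ℝ} :
    x ∈ Aev j S ↔ Irrational x ∧ x ∈ Set.Ioo (0:ℝ) 1 ∧ ⌊1/(gaussMap^[j] x)⌋₊ ∈ S := by
  constructor
  · intro hx
    rw [Aev, Set.mem_iUnion₂] at hx
    obtain ⟨w, hwV, hx⟩ := hx
    rw [digitEv_mem hS] at hx
    obtain ⟨h1, h2, h3, h4⟩ := hx
    rw [hwV.1] at h4
    exact ⟨h1, h2, h4⟩
  · rintro ⟨h1, h2, h3⟩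
    rw [Aev, Set.mem_iUnion₂]
    refine ⟨wordOf j x, ⟨wordOf_length j x, wordOf_valid h1 h2 j⟩, ?_⟩
    rw [digitEv_mem hS, wordOf_length]
    exact ⟨h1, h2, rfl, h3⟩

lemma Aev_vol_le {j : ℕ} {S : Finset ℕ} (hS : ∀ k ∈ S, 1 ≤ k) :
    volume (Aev j S) ≤ ENNReal.ofReal (2 * gapSum S) := by
  have hcnt : (V j).Countable := Set.to_countable _
  have hdisj : (V j).PairwiseDisjoint (fun w => digitEv w S) :=
    cyl_sub_disjoint _ (fun w => digitEv_subset_cyl)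
  have hmeas : ∀ w ∈ V j, MeasurableSet (digitEv w S) :=
    fun w hw => (digitEv_spec hw.2 hS).1
  rw [Aev, measure_biUnion hcnt hdisj hmeas]
  have hgs := gapSum_nonneg hS
  calc ∑' w : (V j), volume (digitEv (w : List ℕ) S)
      ≤ ∑' w : (V j), ENNReal.ofReal (2 * gapSum S) * volume (cylE (w : List ℕ) 0 1) := by
        apply ENNReal.tsum_le_tsum
        intro w
        calc volume (digitEv (w : List ℕ) S)
            ≤ ENNReal.ofReal (2 * gapSum S * cylLen (w : List ℕ)) :=
              (digitEv_spec w.2.2 hS).2.1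
          _ = ENNReal.ofReal (2 * gapSum S) * ENNReal.ofReal (cylLen (w : List ℕ)) := by
              rw [← ENNReal.ofReal_mul (by positivity)]
          _ = ENNReal.ofReal (2 * gapSum S) * volume (cylE (w : List ℕ) 0 1) := by
              rw [(vol_cyl w.2.2).2]
    _ = ENNReal.ofReal (2 * gapSum S) * ∑' w : (V j), volume (cylE (w : List ℕ) 0 1) :=
        ENNReal.tsum_mul_left
    _ ≤ ENNReal.ofReal (2 * gapSum S) * 1 := by
        apply mul_le_mul_right
        exact sum_vol_cyl_le (subset_refl _)
    _ = ENNReal.ofReal (2 * gapSum S) := mul_one _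

/-! ### survivor sets -/

variable (S : ℕ → Finset ℕ)

/-- survivors: digit `n` avoids `S n` for all `m ≤ n ≤ N`. -/
def Gset (m N : ℕ) : Set ℝ :=
  {x | Irrational x ∧ x ∈ Set.Ioo (0:ℝ) 1 ∧
    ∀ n, m ≤ n → n ≤ N → ⌊1/(gaussMap^[n-1] x)⌋₊ ∉ S n}

def Wset (m N : ℕ) : Set (List ℕ) :=
  {w | w ∈ V N ∧ ∀ n, m ≤ n → n ≤ N → w.getD (n-1) 0 ∉ S n}

lemma Gset_subset_Ioo (m N : ℕ) : Gset S m N ⊆ Set.Ioo (0:ℝ) 1 :=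
  fun _ hx => hx.2.1

lemma Gset_vol_le_one (m N : ℕ) : volume (Gset S m N) ≤ 1 := by
  calc volume (Gset S m N) ≤ volume (Set.Ioo (0:ℝ) 1) :=
        measure_mono (Gset_subset_Ioo S m N)
    _ = 1 := by rw [Real.volume_Ioo]; norm_num

lemma Gset_eq {m N : ℕ} (hm : 1 ≤ m) :
    Gset S m N = ⋃ w ∈ Wset S m N, cylE w 0 1 := by
  ext x
  constructor
  · rintro ⟨h1, h2, h3⟩
    rw [Set.mem_iUnion₂]
    refine ⟨wordOf N x, ⟨⟨wordOf_length N x, wordOf_valid h1 h2 N⟩, ?_⟩, ?_⟩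
    · intro n hn1 hn2
      rw [wordOf_getD (by omega)]
      exact h3 n hn1 hn2
    · rw [mem_cyl_iff]
      exact ⟨h1, h2, by rw [wordOf_length]⟩
  · intro hx
    rw [Set.mem_iUnion₂] at hx
    obtain ⟨w, ⟨⟨hwl, hwv⟩, hwcond⟩, hxc⟩ := hx
    rw [mem_cyl_iff] at hxc
    obtain ⟨h1, h2, h3⟩ := hxc
    refine ⟨h1, h2, ?_⟩
    intro n hn1 hn2
    have : (wordOf N x).getD (n-1) 0 = ⌊1/(gaussMap^[n-1] x)⌋₊ :=
      wordOf_getD (by omega)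
    rw [← this, ← hwl, h3]
    exact hwcond n hn1 hn2

lemma Gstep {m N : ℕ} (hm : 1 ≤ m) (hmN : m ≤ N + 1)
    (hSpos : ∀ n, ∀ k ∈ S n, 1 ≤ k) :
    Gset S m (N+1) = ⋃ w ∈ Wset S m N, (cylE w 0 1 \ digitEv w (S (N+1))) := by
  ext x
  constructor
  · rintro ⟨h1, h2, h3⟩
    have hxG : x ∈ Gset S m N := ⟨h1, h2, fun n a b => h3 n a (by omega)⟩
    rw [Gset_eq S hm, Set.mem_iUnion₂] at hxG
    obtain ⟨w, hwW, hxc⟩ := hxG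
    rw [Set.mem_iUnion₂]
    refine ⟨w, hwW, hxc, ?_⟩
    intro hxd
    rw [digitEv_mem (hSpos (N+1))] at hxd
    have := h3 (N+1) hmN (le_refl _)
    rw [hwW.1.1] at hxd
    exact this (by simpa using hxd.2.2.2)
  · intro hx
    rw [Set.mem_iUnion₂] at hx
    obtain ⟨w, hwW, hxc, hxd⟩ := hx
    have hxG : x ∈ Gset S m N := by
      rw [Gset_eq S hm, Set.mem_iUnion₂]
      exact ⟨w, hwW, hxc⟩
    obtain ⟨h1, h2, h3⟩ := hxG
    refine ⟨h1, h2, ?_⟩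
    intro n hn1 hn2
    rcases Nat.lt_or_ge n (N+1) with hlt | hge
    · exact h3 n hn1 (by omega)
    · have hn : n = N + 1 := by omega
      subst hn
      intro hcon
      apply hxd
      rw [digitEv_mem (hSpos (N+1)), hwW.1.1]
      rw [mem_cyl_iff] at hxc
      exact ⟨h1, h2, by rw [← hwW.1.1]; exact hxc.2.2, by simpa using hcon⟩

lemma vol_cyl_diff {w : List ℕ} (hw : Valid w) {S' : Finset ℕ}
    (hS : ∀ k ∈ S', 1 ≤ k) (hg2 : gapSum S' ≤ 2) :
    volume (cylE w 0 1 \ digitEv w S')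
      ≤ ENNReal.ofReal (1 - gapSum S' / 2) * volume (cylE w 0 1) := by
  obtain ⟨hcm, hcv⟩ := vol_cyl hw
  obtain ⟨hdm, hdub, hdlb⟩ := digitEv_spec hw hS
  have hdne : volume (digitEv w S') ≠ ⊤ := by
    apply ne_of_lt
    calc volume (digitEv w S') ≤ volume (cylE w 0 1) :=
          measure_mono digitEv_subset_cyl
      _ < ⊤ := by rw [hcv]; exact ENNReal.ofReal_lt_top
  rw [measure_diff digitEv_subset_cyl hdm.nullMeasurableSet hdne]
  have hgs := gapSum_nonneg hS
  have hL := (cylLen_pos hw).le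
  calc volume (cylE w 0 1) - volume (digitEv w S')
      ≤ ENNReal.ofReal (cylLen w) - ENNReal.ofReal (gapSum S' / 2 * cylLen w) :=
        tsub_le_tsub hcv.le hdlb
    _ = ENNReal.ofReal (cylLen w - gapSum S' / 2 * cylLen w) := by
        rw [ENNReal.ofReal_sub _ (by positivity)]
    _ = ENNReal.ofReal ((1 - gapSum S' / 2) * cylLen w) := by ring_nf
    _ = ENNReal.ofReal (1 - gapSum S' / 2) * ENNReal.ofReal (cylLen w) := by
        rw [ENNReal.ofReal_mul (by linarith)]
    _ = ENNReal.ofReal (1 - gapSum S' / 2) * volume (cylE w 0 1) := by rw [hcv]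

lemma Gset_vol {m : ℕ} (hm : 1 ≤ m) (hSpos : ∀ n, ∀ k ∈ S n, 1 ≤ k)
    (hg2 : ∀ n, gapSum (S n) ≤ 2) (N : ℕ) :
    volume (Gset S m N)
      ≤ ENNReal.ofReal (∏ n ∈ Finset.Icc m N, (1 - gapSum (S n) / 2)) := by
  induction N with
  | zero =>
    rw [Finset.Icc_eq_empty (by omega), Finset.prod_empty, ENNReal.ofReal_one]
    exact Gset_vol_le_one S m 0
  | succ N ih =>
    rcases Nat.lt_or_ge (N+1) m with hlt | hge
    · rw [Finset.Icc_eq_empty (by omega), Finset.prod_empty, ENNReal.ofReal_one]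
      exact Gset_vol_le_one S m (N+1)
    · have hcnt : (Wset S m N).Countable := Set.to_countable _
      have hWV : Wset S m N ⊆ V N := fun w hw => hw.1
      have hmeas : ∀ w ∈ Wset S m N, MeasurableSet (cylE w 0 1 \ digitEv w (S (N+1))) :=
        fun w hw => ((vol_cyl (hWV hw).2).1).diff (digitEv_spec (hWV hw).2 (hSpos (N+1))).1
      have hdisj : (Wset S m N).PairwiseDisjoint
          (fun w => cylE w 0 1 \ digitEv w (S (N+1))) :=
        Set.PairwiseDisjoint.subset
          (cyl_sub_disjoint (j := N) _ (fun w => Set.diff_subset)) hWV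
      rw [Gstep S hm hge (hSpos), measure_biUnion hcnt hdisj hmeas]
      have hfac0 : (0:ℝ) ≤ 1 - gapSum (S (N+1)) / 2 := by linarith [hg2 (N+1)]
      calc ∑' w : (Wset S m N), volume (cylE (w:List ℕ) 0 1 \ digitEv (w:List ℕ) (S (N+1)))
          ≤ ∑' w : (Wset S m N), ENNReal.ofReal (1 - gapSum (S (N+1)) / 2)
              * volume (cylE (w:List ℕ) 0 1) := by
            apply ENNReal.tsum_le_tsum
            intro w
            exact vol_cyl_diff (hWV w.2).2 (hSpos (N+1)) (hg2 (N+1))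
        _ = ENNReal.ofReal (1 - gapSum (S (N+1)) / 2)
              * ∑' w : (Wset S m N), volume (cylE (w:List ℕ) 0 1) :=
            ENNReal.tsum_mul_left
        _ = ENNReal.ofReal (1 - gapSum (S (N+1)) / 2) * volume (Gset S m N) := by
            rw [Gset_eq S hm, measure_biUnion hcnt
              (Set.PairwiseDisjoint.subset cyl_disjoint hWV)
              (fun w hw => (vol_cyl (hWV hw).2).1)]
        _ ≤ ENNReal.ofReal (1 - gapSum (S (N+1)) / 2)
              * ENNReal.ofReal (∏ n ∈ Finset.Icc m N, (1 - gapSum (S n) / 2)) :=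
            mul_le_mul_right ih _
        _ = ENNReal.ofReal (∏ n ∈ Finset.Icc m (N+1), (1 - gapSum (S n) / 2)) := by
            rw [← ENNReal.ofReal_mul hfac0, Finset.prod_Icc_succ_top hge, mul_comm]

/-! ### arithmetic of the specific windows -/

lemma gapSum_Ioc {D M : ℕ} (h : D ≤ M) :
    gapSum (Finset.Ioc D M) = 1/((D:ℝ)+1) - 1/((M:ℝ)+1) := by
  induction M with
  | zero =>
    have hD : D = 0 := by omega
    subst hD
    simp [gapSum]
  | succ M ih =>
    rcases Nat.lt_or_ge D (M+1) with hlt | hge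
    · have hDM : D ≤ M := by omega
      rw [gapSum, Finset.sum_Ioc_succ_top hDM, ← gapSum, ih hDM]
      push_cast
      ring
    · have hD : D = M + 1 := by omega
      subst hD
      simp [gapSum]

lemma gapSum_Ioc_le_two (D M : ℕ) : gapSum (Finset.Ioc D M) ≤ 2 := by
  rcases Nat.lt_or_ge M D with hlt | hge
  · rw [Finset.Ioc_eq_empty (by omega)]
    simp only [gapSum, Finset.sum_empty]
    norm_num
  · rw [gapSum_Ioc hge]
    have h1 : (0:ℝ) < (D:ℝ)+1 := by positivity
    have h2 : (0:ℝ) < (M:ℝ)+1 := by positivity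
    have h3 : 1/((D:ℝ)+1) ≤ 1 := by
      rw [div_le_one h1]; linarith [Nat.cast_nonneg (α := ℝ) D]
    have h4 : (0:ℝ) ≤ 1/((M:ℝ)+1) := by positivity
    linarith

lemma Sd_empty {C : ℝ} (hC : 0 < C) {D : ℕ} (h : (D:ℝ) < C) :
    Finset.Ioc D ⌊(D:ℝ)*(1+1/C)⌋₊ = ∅ := by
  apply Finset.Ioc_eq_empty
  rw [not_lt]
  have hDC : (D:ℝ)/C < 1 := (div_lt_one hC).2 h
  have h2 : ⌊(D:ℝ)*(1+1/C)⌋₊ < D + 1 := by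
    rw [Nat.floor_lt (by positivity)]
    have hXD : (D:ℝ)*(1+1/C) = D + D/C := by ring
    push_cast
    linarith
  omega

lemma Sd_lb {C : ℝ} (hC : 0 < C) {D : ℕ} (hD : 1 ≤ D) (h : C ≤ (D:ℝ)) :
    D + 1 ≤ ⌊(D:ℝ)*(1+1/C)⌋₊ := by
  apply Nat.le_floor
  have hD1 : (1:ℝ) ≤ (D:ℝ) := by exact_mod_cast hD
  have h1 : (1:ℝ) ≤ (D:ℝ)/C := (one_le_div hC).2 h
  have : (D:ℝ)*(1+1/C) = D + D/C := by ring
  push_cast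
  linarith

lemma gap_up {C : ℝ} (hC : 0 < C) {D : ℕ} (hD : 1 ≤ D) (h : C ≤ (D:ℝ)) :
    gapSum (Finset.Ioc D ⌊(D:ℝ)*(1+1/C)⌋₊) ≤ 1/(C*(D:ℝ)) := by
  set M := ⌊(D:ℝ)*(1+1/C)⌋₊ with hM
  have hDM : D ≤ M := by have := Sd_lb hC hD h; omega
  rw [gapSum_Ioc hDM]
  have hD1 : (1:ℝ) ≤ (D:ℝ) := by exact_mod_cast hD
  have hMX : (M:ℝ) ≤ (D:ℝ)*(1+1/C) := Nat.floor_le (by positivity)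
  have hXD : (D:ℝ)*(1+1/C) = (D:ℝ) + (D:ℝ)/C := by ring
  set X := (D:ℝ)*(1+1/C) with hXdef
  have hXpos : 0 < X + 1 := by rw [hXD]; positivity
  have step1 : 1/((X:ℝ)+1) ≤ 1/((M:ℝ)+1) := by
    apply div_le_div_of_nonneg_left one_pos.le (by positivity) (by linarith)
  have step2 : 1/((D:ℝ)+1) - 1/(X+1) ≤ 1/(C*(D:ℝ)) := by
    have hident : 1/((D:ℝ)+1) - 1/(X+1) = ((D:ℝ)/C)/(((D:ℝ)+1)*(X+1)) := by
      rw [hXD]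
      field_simp
      ring
    rw [hident]
    have hDD : (D:ℝ)*(D:ℝ) ≤ ((D:ℝ)+1)*(X+1) := by
      have h0 : 0 ≤ (D:ℝ)/C := div_nonneg (by positivity) hC.le
      have : (D:ℝ) ≤ X := by rw [hXD]; linarith
      nlinarith
    calc ((D:ℝ)/C)/(((D:ℝ)+1)*(X+1)) ≤ ((D:ℝ)/C)/((D:ℝ)*(D:ℝ)) := by
          apply div_le_div_of_nonneg_left (div_nonneg (by positivity) hC.le)
            (by nlinarith : (0:ℝ) < (D:ℝ)*(D:ℝ)) hDD
      _ = 1/(C*(D:ℝ)) := by field_simp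
  linarith

lemma gap_low {C : ℝ} (hC1 : 1 ≤ C) {D : ℕ} (hD : 1 ≤ D) (h : C ≤ (D:ℝ)) :
    1/(12*(C*(D:ℝ))) ≤ gapSum (Finset.Ioc D ⌊(D:ℝ)*(1+1/C)⌋₊) := by
  have hC : (0:ℝ) < C := by linarith
  set M := ⌊(D:ℝ)*(1+1/C)⌋₊ with hM
  have hDM1 : D + 1 ≤ M := Sd_lb hC hD h
  have hDM : D ≤ M := by omega
  rw [gapSum_Ioc hDM]
  have hD1 : (1:ℝ) ≤ (D:ℝ) := by exact_mod_cast hD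
  have hM1R : (D:ℝ) + 1 ≤ (M:ℝ) := by exact_mod_cast hDM1
  have hMX : (M:ℝ) ≤ (D:ℝ)*(1+1/C) := Nat.floor_le (by positivity)
  have hXM : (D:ℝ)*(1+1/C) < (M:ℝ) + 1 := Nat.lt_floor_add_one _
  have hXD : (D:ℝ)*(1+1/C) = (D:ℝ) + (D:ℝ)/C := by ring
  have hDCD : (D:ℝ)/C ≤ (D:ℝ) := by
    rw [div_le_iff₀ hC]; nlinarith
  have hident : 1/((D:ℝ)+1) - 1/((M:ℝ)+1)
      = ((M:ℝ) - (D:ℝ))/(((D:ℝ)+1)*((M:ℝ)+1)) := by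
    field_simp
    try ring
  rw [hident]
  have hnum : (D:ℝ)/(2*C) ≤ (M:ℝ) - (D:ℝ) := by
    rcases le_or_gt ((D:ℝ)/C) 2 with h2 | h2
    · have : (D:ℝ)/(2*C) ≤ 1 := by
        rw [div_le_one (by positivity)]
        rw [div_le_iff₀ hC] at h2
        linarith
      linarith
    · have hMD : (D:ℝ)/C - 1 < (M:ℝ) - (D:ℝ) := by
        rw [hXD] at hXM
        linarith
      have : (D:ℝ)/(2*C) ≤ (D:ℝ)/C - 1 := by
        have : (D:ℝ)/(2*C) = ((D:ℝ)/C)/2 := by ring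
        linarith [this]
      linarith
  have hden : ((D:ℝ)+1)*((M:ℝ)+1) ≤ 6*((D:ℝ)*(D:ℝ)) := by
    rw [hXD] at hMX
    nlinarith
  calc 1/(12*(C*(D:ℝ))) = ((D:ℝ)/(2*C))/(6*((D:ℝ)*(D:ℝ))) := by
        field_simp
        ring
    _ ≤ ((M:ℝ) - (D:ℝ))/(((D:ℝ)+1)*((M:ℝ)+1)) :=
        div_le_div₀ (by linarith) hnum (by positivity) hden

lemma prod_le_exp (T : Finset ℕ) (g : ℕ → ℝ) (hg1 : ∀ n ∈ T, g n ≤ 1) :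
    ∏ n ∈ T, (1 - g n) ≤ Real.exp (- ∑ n ∈ T, g n) := by
  have : Real.exp (- ∑ n ∈ T, g n) = ∏ n ∈ T, Real.exp (- g n) := by
    rw [← Real.exp_sum]
    congr 1
    rw [← Finset.sum_neg_distrib]
  rw [this]
  apply Finset.prod_le_prod
  · intro n hn
    linarith [hg1 n hn]
  · intro n hn
    linarith [Real.add_one_le_exp (- g n)]

end ZOL

open ZOL in
theorem zero_one_law_digit_strict_between (c : ℕ → ℝ) (d : ℕ → ℕ)
    (hc : ∀ n, 0 < c n) (hd : ∀ n, 0 < d n)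
    (hc_inf : Tendsto c atTop atTop)
    (hd_inf : Tendsto (fun n => (d n : ℝ)) atTop atTop) :
    ((Summable (fun n => if c n ≤ (d n : ℝ) then 1 / (c n * (d n : ℝ)) else 0) →
        (volume.restrict (Set.Ico (0 : ℝ) 1))
          {x | Irrational x ∧
            {n : ℕ | d n < cfDigit n x ∧ (cfDigit n x : ℝ) ≤ d n * (1 + 1 / c n)}.Infinite} = 0) ∧
      (¬ Summable (fun n => if c n ≤ (d n : ℝ) then 1 / (c n * (d n : ℝ)) else 0) →
        (volume.restrict (Set.Ico (0 : ℝ) 1))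
          {x | Irrational x ∧
            {n : ℕ | d n < cfDigit n x ∧ (cfDigit n x : ℝ) ≤ d n * (1 + 1 / c n)}.Infinite} = 1)) := by
  classical
  set f : ℕ → ℝ := fun n => if c n ≤ (d n : ℝ) then 1 / (c n * (d n : ℝ)) else 0 with hf
  set Sd : ℕ → Finset ℕ := fun n => Finset.Ioc (d n) ⌊(d n : ℝ) * (1 + 1/(c n))⌋₊ with hSdd
  set T : Set ℝ := {x | Irrational x ∧
    {n : ℕ | d n < cfDigit n x ∧ (cfDigit n x : ℝ) ≤ d n * (1 + 1 / c n)}.Infinite} with hT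
  have hSpos : ∀ n, ∀ k ∈ Sd n, 1 ≤ k := by
    intro n k hk
    rw [hSdd, Finset.mem_Ioc] at hk
    have := hd n
    omega
  have hgap2 : ∀ n, gapSum (Sd n) ≤ 2 := fun n => gapSum_Ioc_le_two _ _
  have hP0 : ∀ n, 0 ≤ gapSum (Sd n) := fun n => gapSum_nonneg (hSpos n)
  have hf0 : ∀ n, 0 ≤ f n := by
    intro n
    rw [hf]
    dsimp only
    split_ifs with h
    · have h1 := hc n
      have h2 : (0:ℝ) < (d n : ℝ) := by exact_mod_cast hd n
      positivity
    · exact le_refl _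
  have hPle : ∀ n, gapSum (Sd n) ≤ f n := by
    intro n
    rw [hf, hSdd]
    dsimp only
    split_ifs with h
    · exact gap_up (hc n) (hd n) h
    · push_neg at h
      rw [Sd_empty (hc n) h]
      simp [gapSum]
  -- membership translation
  have hXnn : ∀ n, (0:ℝ) ≤ (d n : ℝ) * (1 + 1/(c n)) := by
    intro n
    have h1 : (0:ℝ) < 1/(c n) := by
      rw [one_div]; exact inv_pos.2 (hc n)
    have h2 : (0:ℝ) ≤ (d n : ℝ) := Nat.cast_nonneg _
    nlinarith
  have hmem : ∀ n (x : ℝ),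
      ((d n < cfDigit n x ∧ (cfDigit n x : ℝ) ≤ d n * (1 + 1 / c n)) ↔
        cfDigit n x ∈ Sd n) := by
    intro n x
    rw [hSdd]
    dsimp only
    rw [Finset.mem_Ioc, Nat.le_floor_iff (hXnn n)]
  have hEmem : ∀ (j : ℕ) (x : ℝ), x ∈ Aev j (Sd (j+1)) ↔
      Irrational x ∧ x ∈ Set.Ioo (0:ℝ) 1 ∧ cfDigit (j+1) x ∈ Sd (j+1) := by
    intro j x
    have hdig : cfDigit (j+1) x = ⌊1/(gaussMap^[j] x)⌋₊ := rfl
    rw [hdig]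
    exact Aev_mem (hSpos (j+1))
  have hres : ∀ (U : Set ℝ), (volume.restrict (Set.Ico (0:ℝ) 1)) U
      = volume (U ∩ Set.Ico 0 1) := fun U => Measure.restrict_apply' measurableSet_Ico
  have hIoo : ∀ x : ℝ, Irrational x → x ∈ Set.Ico (0:ℝ) 1 → x ∈ Set.Ioo (0:ℝ) 1 := by
    intro x hx hxI
    exact ⟨lt_of_le_of_ne hxI.1 (Ne.symm hx.ne_zero), hxI.2⟩
  constructor
  · -- convergent case
    intro hsum
    rw [hres]
    have hsub : T ∩ Set.Ico 0 1 ⊆ limsup (fun j => Aev j (Sd (j+1))) atTop := by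
      rintro x ⟨⟨hxirr, hxinf⟩, hxIco⟩
      have hxIoo := hIoo x hxirr hxIco
      rw [mem_limsup_iff_frequently_mem, frequently_atTop]
      intro a
      obtain ⟨b, hb, hab⟩ := hxinf.exists_gt a
      refine ⟨b - 1, by omega, ?_⟩
      rw [hEmem]
      refine ⟨hxirr, hxIoo, ?_⟩
      have hb1 : b - 1 + 1 = b := by omega
      rw [hb1]
      exact (hmem b x).1 hb
    have hls : volume (limsup (fun j => Aev j (Sd (j+1))) atTop) = 0 := by
      apply measure_limsup_atTop_eq_zero
      have hsum2 : Summable (fun j => 2 * gapSum (Sd (j+1))) := by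
        refine Summable.of_nonneg_of_le (fun j => by linarith [hP0 (j+1)])
          (fun j => by linarith [hPle (j+1)])
          (((summable_nat_add_iff 1).2 hsum).mul_left 2)
      have hle : ∑' j, volume (Aev j (Sd (j+1)))
          ≤ ∑' j, ENNReal.ofReal (2 * gapSum (Sd (j+1))) :=
        ENNReal.tsum_le_tsum (fun j => Aev_vol_le (hSpos (j+1)))
      rw [← ENNReal.ofReal_tsum_of_nonneg (fun j => by linarith [hP0 (j+1)]) hsum2] at hle
      exact ne_top_of_le_ne_top ENNReal.ofReal_ne_top hle
    exact le_antisymm (le_trans (measure_mono hsub) hls.le) (zero_le)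
  · -- divergent case
    intro hsum
    rw [hres]
    -- divergence of the gap sums
    have hPdiv : ¬ Summable (fun n => gapSum (Sd n)) := by
      intro hcon
      apply hsum
      obtain ⟨n₀, hn₀⟩ := (hc_inf.eventually_ge_atTop 1).exists_forall_of_atTop
      have h1 : Summable (fun n => 12 * gapSum (Sd (n + n₀))) :=
        ((summable_nat_add_iff n₀).2 hcon).mul_left 12
      have h2 : Summable (fun n => f (n + n₀)) := by
        apply Summable.of_nonneg_of_le (fun n => hf0 _) (fun n => ?_) h1
        rw [hf, hSdd]
        dsimp only
        split_ifs with hcd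
        · have hc1 : 1 ≤ c (n + n₀) := hn₀ (n + n₀) (by omega)
          have hlow := gap_low hc1 (hd (n + n₀)) hcd
          have hdpos : (0:ℝ) < (d (n + n₀) : ℝ) := by exact_mod_cast hd (n + n₀)
          have hcpos := hc (n + n₀)
          have heq : (1:ℝ)/(c (n + n₀) * (d (n + n₀):ℝ))
              = 12 * (1/(12*(c (n + n₀) * (d (n + n₀):ℝ)))) := by
            field_simp
          rw [heq]
          have h12 : (0:ℝ) ≤ 12 := by norm_num
          exact mul_le_mul_of_nonneg_left hlow h12
        · have := hP0 (n + n₀)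
          rw [hSdd] at this
          dsimp only at this
          linarith
      exact (summable_nat_add_iff n₀).1 h2
    have htend : Tendsto (fun N => ∑ n ∈ Finset.range N, gapSum (Sd n)) atTop atTop :=
      (not_summable_iff_tendsto_nat_atTop_of_nonneg hP0).1 hPdiv
    -- each tail survivor set is null
    have hGnull : ∀ m, 1 ≤ m → volume (⋂ N, Gset Sd m N) = 0 := by
      intro m hm
      have hball : ∀ N, volume (⋂ N', Gset Sd m N')
          ≤ ENNReal.ofReal (Real.exp (-(∑ n ∈ Finset.Icc m N, gapSum (Sd n) / 2))) := by
        intro N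
        refine le_trans (measure_mono (Set.iInter_subset _ N)) ?_
        refine le_trans (Gset_vol Sd hm hSpos hgap2 N) (ENNReal.ofReal_le_ofReal ?_)
        exact prod_le_exp _ _ (fun n _ => by linarith [hgap2 n])
      have hstend : Tendsto (fun N => ∑ n ∈ Finset.Icc m N, gapSum (Sd n) / 2)
          atTop atTop := by
        have h2 : Tendsto (fun N => (∑ n ∈ Finset.range N, gapSum (Sd n)) / 2)
            atTop atTop := htend.atTop_div_const two_pos
        have h2' : Tendsto (fun N => ∑ n ∈ Finset.range N, gapSum (Sd n) / 2)
            atTop atTop := by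
          convert h2 using 2 with N
          rw [Finset.sum_div]
        have h3 : Tendsto (fun N => (∑ n ∈ Finset.range (N+1), gapSum (Sd n) / 2)
            + (-(∑ n ∈ Finset.range m, gapSum (Sd n) / 2))) atTop atTop :=
          tendsto_atTop_add_const_right _ _ (h2'.comp (tendsto_add_atTop_nat 1))
        apply h3.congr'
        filter_upwards [eventually_ge_atTop m] with N hN
        rw [← Finset.Ico_add_one_right_eq_Icc, Finset.sum_Ico_eq_sub _ (by omega)]
        ring
      have hto0 : Tendsto
          (fun N => ENNReal.ofReal (Real.exp (-(∑ n ∈ Finset.Icc m N, gapSum (Sd n) / 2))))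
          atTop (nhds 0) := by
        have hexp : Tendsto
            (fun N => Real.exp (-(∑ n ∈ Finset.Icc m N, gapSum (Sd n) / 2)))
            atTop (nhds 0) :=
          Real.tendsto_exp_atBot.comp (tendsto_neg_atTop_atBot.comp hstend)
        have := ENNReal.tendsto_ofReal hexp
        simpa using this
      exact le_antisymm (ge_of_tendsto hto0 (Filter.Eventually.of_forall hball)) (zero_le)
    -- the complement is null
    have hcompl : volume (Set.Ico (0:ℝ) 1 \ T) = 0 := by
      have hsub : Set.Ico (0:ℝ) 1 \ T ⊆
          {x : ℝ | ¬ Irrational x} ∪ ⋃ m, (⋂ N, Gset Sd (m+1) N) := by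
        rintro x ⟨hxIco, hxT⟩
        by_cases hxirr : Irrational x
        · right
          have hxIoo := hIoo x hxirr hxIco
          have hfin : ¬ ({n : ℕ | d n < cfDigit n x ∧
              (cfDigit n x : ℝ) ≤ d n * (1 + 1 / c n)}).Infinite := by
            intro hinf
            exact hxT ⟨hxirr, hinf⟩
          rw [Set.not_infinite] at hfin
          obtain ⟨m, hm⟩ := hfin.bddAbove
          refine Set.mem_iUnion.2 ⟨m, Set.mem_iInter.2 fun N => ?_⟩
          refine ⟨hxirr, hxIoo, ?_⟩
          intro n hn1 _ hcon
          have hdig : cfDigit n x = ⌊1/(gaussMap^[n-1] x)⌋₊ := rfl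
          have hmemn : n ∈ {n : ℕ | d n < cfDigit n x ∧
              (cfDigit n x : ℝ) ≤ d n * (1 + 1 / c n)} := by
            apply (hmem n x).2
            rw [hdig]
            exact hcon
          have := hm hmemn
          omega
        · left
          exact hxirr
      apply measure_mono_null hsub
      apply measure_union_null
      · exact (ratSet_countable).measure_zero _
      · exact measure_iUnion_null (fun m => hGnull (m+1) (by omega))
    have hident : T ∩ Set.Ico 0 1 = Set.Ico (0:ℝ) 1 \ (Set.Ico (0:ℝ) 1 \ T) := by
      rw [Set.diff_diff_right_self, Set.inter_comm]
    rw [hident, measure_diff_null hcompl, Real.volume_Ico]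
    norm_num
end

section
/- Borel–Cantelli converse with weak dependence (Chandra): let P be a probability measure and (C_n) measurable sets with Σ_n P(C_n) = ∞. If there is q : ℕ → (0,∞) with Σ_m q(m) < ∞ such that for all i < j, P(C_i ∩ C_j) − P(C_i)P(C_j) ≤ q(j−i) · (P(C_i) + P(C_{i+1}) + P(C_j) + P(C_{j+1})), then P(limsup C_n) = 1. -/
open MeasureTheory Filter Set ENNReal

lemma cs_aux {Ω : Type*} [MeasurableSpace Ω] (P : Measure Ω) [IsProbabilityMeasure P]
    (C : ℕ → Set Ω) (hC : ∀ n, MeasurableSet (C n)) (I : Finset ℕ) :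
    (∑ k ∈ I, P (C k)) ^ 2 ≤ (∑ i ∈ I, ∑ j ∈ I, P (C i ∩ C j)) * P (⋃ k ∈ I, C k) := by
  classical
  set T : Ω → ℝ≥0∞ := fun ω => ∑ k ∈ I, (C k).indicator (fun _ => (1:ℝ≥0∞)) ω with hTdef
  set A : Set Ω := ⋃ k ∈ I, C k with hAdef
  have hAmeas : MeasurableSet A := MeasurableSet.biUnion I.countable_toSet (fun k _ => hC k)
  have hTmeas : Measurable T := by
    apply Finset.measurable_sum
    intro k _
    exact measurable_const.indicator (hC k)
  have hGmeas : Measurable (A.indicator (fun _ => (1:ℝ≥0∞))) := measurable_const.indicator hAmeas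
  have hmul : ∀ ω, (T * A.indicator (fun _ => (1:ℝ≥0∞))) ω = T ω := by
    intro ω
    by_cases hω : ω ∈ A
    · simp [Set.indicator_of_mem hω]
    · have : T ω = 0 := by
        apply Finset.sum_eq_zero
        intro k hk
        apply Set.indicator_of_notMem
        intro hmem
        exact hω (Set.mem_biUnion hk hmem)
      simp [this]
  have hconj : Real.HolderConjugate 2 2 := Real.holderConjugate_iff.mpr ⟨one_lt_two, by norm_num⟩
  have holder := ENNReal.lintegral_mul_le_Lp_mul_Lq P hconj hTmeas.aemeasurable hGmeas.aemeasurable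
  have hTint : ∫⁻ ω, T ω ∂P = ∑ k ∈ I, P (C k) := by
    rw [lintegral_finset_sum _ (fun k _ => measurable_const.indicator (hC k))]
    refine Finset.sum_congr rfl (fun k _ => ?_)
    exact lintegral_indicator_one (hC k)
  have hT2 : ∫⁻ ω, T ω ^ (2:ℝ) ∂P = ∑ i ∈ I, ∑ j ∈ I, P (C i ∩ C j) := by
    have hpt : ∀ ω, T ω ^ (2:ℝ) = ∑ i ∈ I, ∑ j ∈ I, (C i ∩ C j).indicator (fun _ => (1:ℝ≥0∞)) ω := by
      intro ω
      rw [show ((2:ℝ)) = ((2:ℕ):ℝ) by norm_num, ENNReal.rpow_natCast, sq, hTdef]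
      rw [Finset.sum_mul_sum]
      refine Finset.sum_congr rfl (fun i _ => Finset.sum_congr rfl (fun j _ => ?_))
      rw [← Set.inter_indicator_mul]
      simp
    simp_rw [hpt]
    rw [lintegral_finset_sum _ (fun i _ => Finset.measurable_sum _
      (fun j _ => measurable_const.indicator ((hC i).inter (hC j))))]
    refine Finset.sum_congr rfl (fun i _ => ?_)
    rw [lintegral_finset_sum _ (fun j _ => measurable_const.indicator ((hC i).inter (hC j)))]
    exact Finset.sum_congr rfl (fun j _ => lintegral_indicator_one ((hC i).inter (hC j)))
  have hG2 : ∫⁻ ω, (A.indicator (fun _ => (1:ℝ≥0∞))) ω ^ (2:ℝ) ∂P = P A := by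
    have : ∀ ω, (A.indicator (fun _ => (1:ℝ≥0∞))) ω ^ (2:ℝ) = A.indicator (fun _ => (1:ℝ≥0∞)) ω := by
      intro ω
      by_cases hω : ω ∈ A <;> simp [Set.indicator_of_mem, Set.indicator_of_notMem, hω,
        ENNReal.zero_rpow_of_pos (by norm_num : (0:ℝ) < 2)]
    simp_rw [this]
    exact lintegral_indicator_one hAmeas
  rw [show (∫⁻ ω, (T * A.indicator (fun _ => (1:ℝ≥0∞))) ω ∂P) = ∑ k ∈ I, P (C k) by
        rw [← hTint]; exact lintegral_congr hmul,
      hT2, hG2] at holder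
  calc (∑ k ∈ I, P (C k)) ^ 2
      ≤ ((∑ i ∈ I, ∑ j ∈ I, P (C i ∩ C j)) ^ (1/(2:ℝ)) * P A ^ (1/(2:ℝ))) ^ 2 := by
        exact pow_le_pow_left' holder 2
    _ = (∑ i ∈ I, ∑ j ∈ I, P (C i ∩ C j)) * P A := by
        rw [mul_pow, ← ENNReal.rpow_natCast (_ ^ (1/(2:ℝ))), ← ENNReal.rpow_natCast (P A ^ (1/(2:ℝ))),
          ← ENNReal.rpow_mul, ← ENNReal.rpow_mul]
        norm_num

lemma sum_bound_aux {Ω : Type*} [MeasurableSpace Ω] (P : Measure Ω) [IsProbabilityMeasure P]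
    (C : ℕ → Set Ω)
    (q : ℕ → ℝ) (hq : ∀ m, 0 < q m) (hqs : Summable q)
    (hdep : ∀ i j, i < j →
      (P (C i ∩ C j)).toReal - (P (C i)).toReal * (P (C j)).toReal ≤
        q (j - i) * ((P (C i)).toReal + (P (C (i + 1))).toReal +
          (P (C j)).toReal + (P (C (j + 1))).toReal)) (m n : ℕ) :
    ∑ i ∈ Finset.Ico m n, ∑ j ∈ Finset.Ico m n, (P (C i ∩ C j)).toReal ≤
      (∑ k ∈ Finset.Ico m n, (P (C k)).toReal) ^ 2 + (∑ k ∈ Finset.Ico m n, (P (C k)).toReal) +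
      8 * (∑' k, q k) * ((∑ k ∈ Finset.Ico m n, (P (C k)).toReal) + 1) := by
  classical
  set p : ℕ → ℝ := fun k => (P (C k)).toReal with hpdef
  set I : Finset ℕ := Finset.Ico m n with hIdef
  set s : ℝ := ∑ k ∈ I, p k with hsdef
  set Q : ℝ := ∑' k, q k with hQdef
  have hp0 : ∀ k, 0 ≤ p k := fun k => ENNReal.toReal_nonneg
  have hp1 : ∀ k, p k ≤ 1 := fun k => by
    rw [hpdef]
    exact ENNReal.toReal_le_of_le_ofReal one_pos.le (by simpa using prob_le_one (μ := P) (s := C k))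
  have hs0 : 0 ≤ s := Finset.sum_nonneg fun k _ => hp0 k
  have hQ0 : 0 ≤ Q := tsum_nonneg fun k => (hq k).le
  set w : ℕ → ℕ → ℝ := fun i j => if i = j then 0 else q (max i j - min i j) with hwdef
  have hw0 : ∀ i j, 0 ≤ w i j := by
    intro i j; rw [hwdef]; dsimp only
    split
    · exact le_rfl
    · exact (hq _).le
  have hwsymm : ∀ i j, w i j = w j i := by
    intro i j; rw [hwdef]; dsimp only
    by_cases h : i = j
    · simp [h]
    · rw [if_neg h, if_neg (Ne.symm h), max_comm, min_comm]
  -- termwise bound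
  have hterm : ∀ i j, (P (C i ∩ C j)).toReal ≤
      p i * p j + (if i = j then p i else 0) + (w i j * (p i + p (i+1)) + w i j * (p j + p (j+1))) := by
    intro i j
    rcases lt_trichotomy i j with hij | hij | hij
    · have h := hdep i j hij
      have hw : w i j = q (j - i) := by
        rw [hwdef]; dsimp only
        rw [if_neg hij.ne, max_eq_right hij.le, min_eq_left hij.le]
      rw [if_neg hij.ne, hw]
      nlinarith [h]
    · subst hij
      rw [Set.inter_self, if_pos rfl]
      have : w i i = 0 := by rw [hwdef]; simp
      rw [this]
      nlinarith [hp0 i]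
    · have h := hdep j i hij
      have hw : w i j = q (i - j) := by
        rw [hwdef]; dsimp only
        rw [if_neg hij.ne', max_eq_left hij.le, min_eq_right hij.le]
      rw [Set.inter_comm, if_neg hij.ne', hw]
      nlinarith [h]
  -- sum of the termwise bound
  have hsum1 : ∑ i ∈ I, ∑ j ∈ I, p i * p j = s ^ 2 := by
    rw [hsdef, sq, Finset.sum_mul_sum]
  have hsum2 : ∑ i ∈ I, ∑ j ∈ I, (if i = j then p i else 0) = s := by
    refine Finset.sum_congr rfl (fun i hi => ?_) |>.trans rfl
    rw [Finset.sum_ite_eq I i (fun _ => p i), if_pos hi]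
  -- inner w-sum bound
  have hinner : ∀ i, ∑ j ∈ I, w i j ≤ 2 * Q := by
    intro i
    have hsplit : ∑ j ∈ I, w i j ≤
        ∑ j ∈ I.filter (· < i), q (i - j) + ∑ j ∈ I.filter (i < ·), q (j - i) := by
      have : ∑ j ∈ I, w i j = ∑ j ∈ I.filter (· ≠ i), w i j := by
        rw [Finset.sum_filter_of_ne]
        intro j _ hwne
        intro hji
        apply hwne
        rw [hji, hwdef]; simp
      rw [this]
      have hun : I.filter (· ≠ i) = I.filter (· < i) ∪ I.filter (i < ·) := by
        ext j
        simp only [Finset.mem_filter, Finset.mem_union]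
        constructor
        · rintro ⟨hj, hne⟩
          rcases lt_or_gt_of_ne hne with h | h
          · exact Or.inl ⟨hj, h⟩
          · exact Or.inr ⟨hj, h⟩
        · rintro (⟨hj, h⟩ | ⟨hj, h⟩)
          · exact ⟨hj, h.ne⟩
          · exact ⟨hj, h.ne'⟩
      have hdisj : Disjoint (I.filter (· < i)) (I.filter (i < ·)) := by
        rw [Finset.disjoint_left]
        intro j hj1 hj2
        simp only [Finset.mem_filter] at hj1 hj2
        omega
      rw [hun, Finset.sum_union hdisj]
      gcongr with j hj j hj
      · simp only [Finset.mem_filter] at hj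
        simp only [hwdef]
        rw [if_neg (by omega : ¬ i = j), max_eq_left hj.2.le, min_eq_right hj.2.le]
      · simp only [Finset.mem_filter] at hj
        simp only [hwdef]
        rw [if_neg (by omega : ¬ i = j), max_eq_right hj.2.le, min_eq_left hj.2.le]
    have h1 : ∑ j ∈ I.filter (· < i), q (i - j) ≤ Q := by
      rw [show ∑ j ∈ I.filter (· < i), q (i - j)
          = ∑ d ∈ (I.filter (· < i)).image (fun j => i - j), q d from
        (Finset.sum_image (by
          intro a ha b hb hab
          simp only [Finset.mem_coe, Finset.mem_filter] at ha hb
          omega)).symm]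
      exact Summable.sum_le_tsum _ (fun k _ => (hq k).le) hqs
    have h2 : ∑ j ∈ I.filter (i < ·), q (j - i) ≤ Q := by
      rw [show ∑ j ∈ I.filter (i < ·), q (j - i)
          = ∑ d ∈ (I.filter (i < ·)).image (fun j => j - i), q d from
        (Finset.sum_image (by
          intro a ha b hb hab
          simp only [Finset.mem_coe, Finset.mem_filter] at ha hb hab
          omega)).symm]
      exact Summable.sum_le_tsum _ (fun k _ => (hq k).le) hqs
    linarith
  -- shifted sum bound
  have hshift : ∑ k ∈ I, p (k + 1) ≤ s + 1 := by
    have h1 : ∑ k ∈ I, p (k + 1) = ∑ j ∈ I.image (· + 1), p j :=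
      (Finset.sum_image (by intro a _ b _ h; simp only at h; omega)).symm
    have h2 : I.image (· + 1) ⊆ Finset.Ico m (n + 1) := by
      intro j hj
      simp only [Finset.mem_image, hIdef, Finset.mem_Ico] at hj ⊢
      obtain ⟨a, ha, rfl⟩ := hj
      omega
    have h3 : ∑ j ∈ I.image (· + 1), p j ≤ ∑ j ∈ Finset.Ico m (n + 1), p j :=
      Finset.sum_le_sum_of_subset_of_nonneg h2 (fun j _ _ => hp0 j)
    have h4 : ∑ j ∈ Finset.Ico m (n + 1), p j ≤ s + 1 := by
      rcases le_or_gt m n with hmn | hmn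
      · rw [Finset.sum_Ico_succ_top hmn]
        have := hp1 n
        rw [hsdef, hIdef]
        linarith
      · rw [Finset.Ico_eq_empty (by omega), Finset.sum_empty]
        linarith
    linarith
  -- the main E bound
  have hE : ∑ i ∈ I, ∑ j ∈ I, (w i j * (p i + p (i+1)) + w i j * (p j + p (j+1)))
      ≤ 8 * Q * (s + 1) := by
    have hswap : ∑ i ∈ I, ∑ j ∈ I, w i j * (p j + p (j+1))
        = ∑ i ∈ I, ∑ j ∈ I, w i j * (p i + p (i+1)) := by
      rw [Finset.sum_comm]
      refine Finset.sum_congr rfl (fun i _ => Finset.sum_congr rfl (fun j _ => ?_))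
      rw [hwsymm]
    have e1 : ∑ i ∈ I, ∑ j ∈ I, (w i j * (p i + p (i+1)) + w i j * (p j + p (j+1)))
        = 2 * ∑ i ∈ I, (p i + p (i+1)) * ∑ j ∈ I, w i j := by
      simp_rw [Finset.sum_add_distrib]
      rw [hswap, ← two_mul]
      congr 1
      refine Finset.sum_congr rfl (fun i _ => ?_)
      rw [Finset.mul_sum]
      exact Finset.sum_congr rfl (fun j _ => by ring)
    rw [e1]
    have h2 : ∑ i ∈ I, (p i + p (i+1)) * ∑ j ∈ I, w i j
        ≤ ∑ i ∈ I, (p i + p (i+1)) * (2 * Q) := by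
      refine Finset.sum_le_sum (fun i _ => ?_)
      exact mul_le_mul_of_nonneg_left (hinner i) (by have := hp0 i; have := hp0 (i+1); linarith)
    have h3 : ∑ i ∈ I, (p i + p (i+1)) * (2 * Q) = (s + ∑ k ∈ I, p (k+1)) * (2 * Q) := by
      rw [← Finset.sum_mul, Finset.sum_add_distrib]
    nlinarith [hshift, hs0, hQ0]
  calc ∑ i ∈ I, ∑ j ∈ I, (P (C i ∩ C j)).toReal
      ≤ ∑ i ∈ I, ∑ j ∈ I, (p i * p j + (if i = j then p i else 0)
          + (w i j * (p i + p (i+1)) + w i j * (p j + p (j+1)))) :=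
        Finset.sum_le_sum fun i _ => Finset.sum_le_sum fun j _ => hterm i j
    _ = s ^ 2 + s + ∑ i ∈ I, ∑ j ∈ I, (w i j * (p i + p (i+1)) + w i j * (p j + p (j+1))) := by
        simp_rw [Finset.sum_add_distrib]
        rw [hsum1, hsum2]
    _ ≤ s ^ 2 + s + 8 * Q * (s + 1) := by linarith [hE]

theorem chandra_borel_cantelli {Ω : Type*} [MeasurableSpace Ω] (P : Measure Ω)
    [IsProbabilityMeasure P] (C : ℕ → Set Ω) (hC : ∀ n, MeasurableSet (C n))
    (hsum : ∑' n, P (C n) = ⊤)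
    (q : ℕ → ℝ) (hq : ∀ m, 0 < q m) (hqs : Summable q)
    (hdep : ∀ i j, i < j →
      (P (C i ∩ C j)).toReal - (P (C i)).toReal * (P (C j)).toReal ≤
        q (j - i) * ((P (C i)).toReal + (P (C (i + 1))).toReal +
          (P (C j)).toReal + (P (C (j + 1))).toReal)) :
    P (limsup C atTop) = 1 := by
  classical
  set p : ℕ → ℝ := fun k => (P (C k)).toReal with hpdef
  set Q : ℝ := ∑' k, q k with hQdef
  have hp0 : ∀ k, 0 ≤ p k := fun k => ENNReal.toReal_nonneg
  have hQ0 : 0 ≤ Q := tsum_nonneg fun k => (hq k).le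
  have hfin : ∀ k, P (C k) ≠ ⊤ := fun k => measure_ne_top P _
  -- p is not summable
  have hp_not : ¬ Summable p := by
    intro h
    have h2 : Summable (fun k => (P (C k)).toNNReal) := by
      rw [← NNReal.summable_coe]
      exact h.congr (fun k => by simp [hpdef, ENNReal.coe_toNNReal (hfin k), ENNReal.toReal])
    have h3 := ENNReal.tsum_coe_ne_top_iff_summable.mpr h2
    apply h3
    rw [← hsum]
    exact tsum_congr fun k => ENNReal.coe_toNNReal (hfin k)
  -- tail partial sums tend to infinity
  have htail : ∀ m, Tendsto (fun n => ∑ k ∈ Finset.Ico m n, p k) atTop atTop := by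
    intro m
    have h1 := (not_summable_iff_tendsto_nat_atTop_of_nonneg hp0).mp hp_not
    have h2 : Tendsto (fun n => (∑ k ∈ Finset.range n, p k) - ∑ k ∈ Finset.range m, p k)
        atTop atTop := tendsto_atTop_add_const_right _ _ h1
    apply h2.congr'
    filter_upwards [eventually_ge_atTop m] with n hn
    rw [Finset.sum_Ico_eq_sub _ hn]
  -- each tail union has probability one
  have hU : ∀ m, P (⋃ k, ⋃ (_ : m ≤ k), C k) = 1 := by
    intro m
    set U : Set Ω := ⋃ k, ⋃ (_ : m ≤ k), C k with hUdef
    have hUm : MeasurableSet U := MeasurableSet.iUnion fun k => MeasurableSet.iUnion fun _ => hC k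
    set α : ℝ := (P U).toReal with hαdef
    have hα1 : α ≤ 1 := by
      rw [hαdef]
      exact ENNReal.toReal_le_of_le_ofReal one_pos.le (by simpa using prob_le_one (μ := P) (s := U))
    have hα0 : 0 ≤ α := ENNReal.toReal_nonneg
    -- key inequality for each n
    have hkey : ∀ n, (∑ k ∈ Finset.Ico m n, p k) ^ 2 ≤
        ((∑ k ∈ Finset.Ico m n, p k) ^ 2 + (∑ k ∈ Finset.Ico m n, p k)
          + 8 * Q * ((∑ k ∈ Finset.Ico m n, p k) + 1)) * α := by
      intro n
      set I : Finset ℕ := Finset.Ico m n with hIdef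
      have hcs := cs_aux P C hC I
      have hsub : (⋃ k ∈ I, C k) ⊆ U := by
        intro ω hω
        rw [Set.mem_iUnion₂] at hω
        obtain ⟨k, hk, hωk⟩ := hω
        rw [hIdef, Finset.mem_Ico] at hk
        exact Set.mem_iUnion₂.mpr ⟨k, hk.1, hωk⟩
      have hcs2 : (∑ k ∈ I, P (C k)) ^ 2 ≤ (∑ i ∈ I, ∑ j ∈ I, P (C i ∩ C j)) * P U :=
        hcs.trans (mul_le_mul_right (measure_mono hsub) _)
      have hD : (∑ i ∈ I, ∑ j ∈ I, P (C i ∩ C j)) ≠ ⊤ := by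
        refine (lt_of_le_of_lt (Finset.sum_le_sum fun i _ => Finset.sum_le_sum
          fun j _ => (prob_le_one (μ := P))) ?_).ne
        simp only [Finset.sum_const, nsmul_eq_mul]
        exact lt_of_le_of_lt (le_refl _) (by
          exact ENNReal.mul_lt_top (by simp) (ENNReal.mul_lt_top (by simp) (by simp)))
      have hreal := ENNReal.toReal_mono (by
          exact ENNReal.mul_ne_top hD (measure_ne_top P U)) hcs2
      rw [ENNReal.toReal_pow, ENNReal.toReal_mul,
        ENNReal.toReal_sum (fun k _ => hfin k)] at hreal
      have hDeq : (∑ i ∈ I, ∑ j ∈ I, P (C i ∩ C j)).toReal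
          = ∑ i ∈ I, ∑ j ∈ I, (P (C i ∩ C j)).toReal := by
        rw [ENNReal.toReal_sum (fun i _ => by
          exact (lt_of_le_of_lt (Finset.sum_le_sum fun j _ => prob_le_one (μ := P))
            (by simp only [Finset.sum_const, nsmul_eq_mul];
                exact ENNReal.mul_lt_top (by simp) (by simp))).ne)]
        exact Finset.sum_congr rfl fun i _ => ENNReal.toReal_sum fun j _ => measure_ne_top P _
      rw [hDeq] at hreal
      have hbound := sum_bound_aux P C q hq hqs hdep m n
      calc (∑ k ∈ Finset.Ico m n, p k) ^ 2 ≤ (∑ i ∈ I, ∑ j ∈ I, (P (C i ∩ C j)).toReal) * α :=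
            hreal
        _ ≤ ((∑ k ∈ Finset.Ico m n, p k) ^ 2 + (∑ k ∈ Finset.Ico m n, p k)
              + 8 * Q * ((∑ k ∈ Finset.Ico m n, p k) + 1)) * α :=
            mul_le_mul_of_nonneg_right hbound hα0
    -- conclude α = 1
    have hαge : 1 ≤ α := by
      by_contra hlt
      push_neg at hlt
      set K : ℝ := 1 + 8 * Q with hKdef
      have hK0 : 0 < K := by positivity
      obtain ⟨n, hn⟩ := ((htail m).eventually_ge_atTop (max 1 (2 * K / (1 - α) + 1))).exists
      set s : ℝ := ∑ k ∈ Finset.Ico m n, p k with hsdef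
      have hs1 : 1 ≤ s := le_trans (le_max_left _ _) hn
      have hs2 : 2 * K / (1 - α) + 1 ≤ s := le_trans (le_max_right _ _) hn
      have h1α : 0 < 1 - α := by linarith
      have hkn := hkey n
      rw [← hsdef] at hkn
      have h5 : 2 * K / (1 - α) * (1 - α) = 2 * K := by field_simp
      nlinarith [hkn, mul_le_mul_of_nonneg_left hα1 (le_trans zero_le_one hs1), sq_nonneg s]
    have : α = 1 := le_antisymm hα1 hαge
    exact (ENNReal.toReal_eq_one_iff _).mp this
  -- conclude for limsup
  have hlimsup : limsup C atTop = ⋂ m, ⋃ k, ⋃ (_ : m ≤ k), C k := by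
    rw [limsup_eq_iInf_iSup_of_nat]
    rfl
  rw [hlimsup]
  have hUm : ∀ m, MeasurableSet (⋃ k, ⋃ (_ : m ≤ k), C k) :=
    fun m => MeasurableSet.iUnion fun k => MeasurableSet.iUnion fun _ => hC k
  rw [← prob_compl_eq_zero_iff (MeasurableSet.iInter hUm)]
  rw [Set.compl_iInter]
  refine measure_iUnion_null fun m => ?_
  rw [prob_compl_eq_zero_iff (hUm m)]
  exact hU m
end
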